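/- Let $\mathbb{F}_q$ be a finite field, $S \subseteq \mathbb{F}_q$ with $|S| = s \ge 2$, and let $P_1,\dots,P_t$ be nonzero polynomials in $\mathbb{F}_q[x_1,\dots,x_n]$ of individual degree at most $s-1$ in each variable, such that the leading monomials $\mathrm{LM}(P_1),\dots,\mathrm{LM}(P_t)$ (with respect to graded lexicographic order) are supported on pairwise disjoint sets of variables, each involving at most $d$ variables. Then the set $Z = \{\mathbf{a} \in S^n : P_i(\mathbf{a}) = 0 \text{ for all } i\}$ of common zeros satisfies $|Z| \le (1 - 1/s^d)^t \cdot s^n$. -/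

import Mathlib

open Finset

/-- Graded lexicographic order on exponent vectors: `e < f` iff the total degree
of `e` is smaller, or the total degrees agree and `e` is lexicographically
smaller. -/
def GrlexLT {n : ℕ} (e f : Fin n →₀ ℕ) : Prop :=
  (∑ i, e i) < (∑ i, f i) ∨
    ((∑ i, e i) = (∑ i, f i) ∧ ∃ i : Fin n, (∀ j, j < i → e j = f j) ∧ e i < f i)

open MvPolynomial
noncomputable def theta {n : ℕ} (e : Fin n →₀ ℕ) : ℕ ×ₗ Lex (Fin n →₀ ℕ) :=
  toLex (∑ i, e i, toLex e)

theorem grlex_iff {n : ℕ} (e f : Fin n →₀ ℕ) : GrlexLT e f ↔ theta e < theta f := by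
  rw [theta, theta, Prod.Lex.lt_iff]
  constructor
  · rintro (h | ⟨h1, h2⟩)
    · exact Or.inl h
    · exact Or.inr ⟨h1, (Finsupp.lex_def).2 h2⟩
  · rintro (h | ⟨h1, h2⟩)
    · exact Or.inl h
    · exact Or.inr ⟨h1, (Finsupp.lex_def).1 h2⟩

theorem theta_inj {n : ℕ} : Function.Injective (theta (n := n)) := by
  intro e f h
  have h2 : (ofLex (theta e)).2 = (ofLex (theta f)).2 := by rw [h]
  simpa [theta] using congrArg ofLex h2

theorem grlex_add {n : ℕ} {e f : Fin n →₀ ℕ} (c : Fin n →₀ ℕ) (h : GrlexLT e f) :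
    GrlexLT (c + e) (c + f) := by
  rcases h with h | ⟨h1, i, hj, hi⟩
  · left; simpa [Finset.sum_add_distrib] using Nat.add_lt_add_left h (∑ i, c i)
  · right
    refine ⟨by simp [Finset.sum_add_distrib, h1], i, fun j hji => by simp [hj j hji], by simpa using hi⟩

theorem sum_add_finsupp {n : ℕ} (u v : Fin n →₀ ℕ) :
    (∑ i, (u + v) i) = (∑ i, u i) + (∑ i, v i) := by
  simp [Finsupp.add_apply, Finset.sum_add_distrib]

theorem sum_single_finsupp {n : ℕ} (j : Fin n) (k : ℕ) :
    (∑ i, (Finsupp.single j k) i) = k := by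
  rw [Finset.sum_eq_single_of_mem j (Finset.mem_univ j)]
  · simp
  · intro i _ hij
    simp [Finsupp.single_apply, (Ne.symm hij)]
theorem interp {F : Type*} [Field F] [DecidableEq F] {n : ℕ} (S : Finset F)
    (ψ : (Fin n → F) → F) :
    ∃ Q : MvPolynomial (Fin n) F, ∀ a : Fin n → F, (∀ j, a j ∈ S) →
      MvPolynomial.eval a Q = ψ a := by
  classical
  refine ⟨∑ b ∈ Fintype.piFinset (fun _ : Fin n => S),
    MvPolynomial.C (ψ b * (∏ j, ∏ c ∈ S.erase (b j), (b j - c))⁻¹) *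
      ∏ j, ∏ c ∈ S.erase (b j), (MvPolynomial.X j - MvPolynomial.C c), fun a ha => ?_⟩
  rw [map_sum, Finset.sum_eq_single a]
  · have hne : (∏ j, ∏ c ∈ S.erase (a j), (a j - c)) ≠ 0 := by
      apply Finset.prod_ne_zero_iff.2
      intro j _
      apply Finset.prod_ne_zero_iff.2
      intro c hc
      exact sub_ne_zero.2 (Finset.ne_of_mem_erase hc).symm
    simp only [map_mul, eval_C, map_prod, eval_X, map_sub]
    rw [mul_assoc, inv_mul_cancel₀ hne, mul_one]
  · intro b hb hba
    have : ∃ j, b j ≠ a j := by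
      by_contra h
      push_neg at h
      exact hba (funext h)
    obtain ⟨j, hj⟩ := this
    simp only [map_mul, eval_C, map_prod, eval_X, map_sub]
    have : (∏ c ∈ S.erase (b j), (a j - c)) = 0 :=
      Finset.prod_eq_zero (Finset.mem_erase.2 ⟨hj.symm, ha j⟩) (by ring)
    have h0 : (∏ j, ∏ c ∈ S.erase (b j), (a j - c)) = 0 :=
      Finset.prod_eq_zero (Finset.mem_univ j) this
    rw [h0, mul_zero]
  · intro h
    exact absurd (Fintype.mem_piFinset.2 ha) h

theorem reduction {F : Type*} [Field F] [DecidableEq F] {n s t : ℕ}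
    (S : Finset F) (hS : S.card = s)
    (P : Fin t → MvPolynomial (Fin n) F)
    (m : Fin t → (Fin n →₀ ℕ))
    (hlm : ∀ i, m i ∈ (P i).support ∧ ∀ e ∈ (P i).support, e ≠ m i → GrlexLT e (m i))
    (Q : MvPolynomial (Fin n) F) :
    ∃ Q' : MvPolynomial (Fin n) F,
      (∀ e ∈ Q'.support, (∀ j, e j < s) ∧ ∀ i, ¬ m i ≤ e) ∧
      ∀ a : Fin n → F, (∀ j, a j ∈ S) → (∀ i, MvPolynomial.eval a (P i) = 0) →
        MvPolynomial.eval a Q' = MvPolynomial.eval a Q := by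
  classical
  suffices H : ∀ μ : ℕ ×ₗ Lex (Fin n →₀ ℕ), ∀ Q : MvPolynomial (Fin n) F,
      (∀ e ∈ Q.support, theta e ≤ μ) →
      ∃ Q' : MvPolynomial (Fin n) F,
        (∀ e ∈ Q'.support, (∀ j, e j < s) ∧ ∀ i, ¬ m i ≤ e) ∧
        ∀ a : Fin n → F, (∀ j, a j ∈ S) → (∀ i, MvPolynomial.eval a (P i) = 0) →
          MvPolynomial.eval a Q' = MvPolynomial.eval a Q by
    by_cases hQ0 : Q.support = ∅
    · exact ⟨0, by simp, by simp [MvPolynomial.support_eq_empty.mp hQ0]⟩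
    · have hne : Q.support.Nonempty := Finset.nonempty_of_ne_empty hQ0
      obtain ⟨e0, he0, hmax⟩ := Finset.exists_max_image Q.support theta hne
      exact H (theta e0) Q hmax
  intro μ
  induction μ using WellFoundedLT.induction with
  | _ μ IH =>
  intro Q hQ
  by_cases hQ0 : Q.support = ∅
  · exact ⟨0, by simp, by simp [MvPolynomial.support_eq_empty.mp hQ0]⟩
  have hne : Q.support.Nonempty := Finset.nonempty_of_ne_empty hQ0
  obtain ⟨e, he, hmax⟩ := Finset.exists_max_image Q.support theta hne
  have heμ : theta e ≤ μ := hQ e he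
  set c := MvPolynomial.coeff e Q with hc
  have hc0 : c ≠ 0 := MvPolynomial.mem_support_iff.mp he
  -- auxiliary recursion step
  have aux : ∀ Q1 : MvPolynomial (Fin n) F, (∀ f ∈ Q1.support, theta f < theta e) →
      ∃ Q' : MvPolynomial (Fin n) F,
        (∀ u ∈ Q'.support, (∀ j, u j < s) ∧ ∀ i, ¬ m i ≤ u) ∧
        ∀ a : Fin n → F, (∀ j, a j ∈ S) → (∀ i, MvPolynomial.eval a (P i) = 0) →
          MvPolynomial.eval a Q' = MvPolynomial.eval a Q1 := by
    intro Q1 h1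
    by_cases h10 : Q1.support = ∅
    · exact ⟨0, by simp, by simp [MvPolynomial.support_eq_empty.mp h10]⟩
    · have hne1 : Q1.support.Nonempty := Finset.nonempty_of_ne_empty h10
      obtain ⟨f0, hf0, hmax1⟩ := Finset.exists_max_image Q1.support theta hne1
      exact IH (theta f0) (lt_of_lt_of_le (h1 f0 hf0) heμ) Q1 hmax1
  by_cases hbox : ∃ j, s ≤ e j
  · -- reduce using the vanishing polynomial of S in variable j
    obtain ⟨j, hj⟩ := hbox
    set p : Polynomial F := ∏ b ∈ S, (Polynomial.X - Polynomial.C b) with hp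
    have hmonic : p.Monic := Polynomial.monic_prod_of_monic _ _
      (fun b _ => Polynomial.monic_X_sub_C b)
    have hpdeg : p.natDegree = s := by
      rw [hp, Polynomial.natDegree_prod _ _ (fun b _ => Polynomial.X_sub_C_ne_zero b)]
      simp [hS]
    have hsingle_le : Finsupp.single j s ≤ e := Finsupp.single_le_iff.mpr hj
    set e' := e - Finsupp.single j s with he'
    have he'e : e' + Finsupp.single j s = e := tsub_add_cancel_of_le hsingle_le
    set sub : MvPolynomial (Fin n) F :=
      ∑ k ∈ Finset.range (s+1), MvPolynomial.monomial (e' + Finsupp.single j k) (c * p.coeff k)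
      with hsubdef
    have hsubg : sub = MvPolynomial.monomial e' c * Polynomial.aeval (MvPolynomial.X j) p := by
      rw [Polynomial.aeval_eq_sum_range, hpdeg, Finset.mul_sum]
      exact Finset.sum_congr rfl fun k _ => by
        rw [MvPolynomial.X_pow_eq_monomial, MvPolynomial.smul_monomial,
          MvPolynomial.monomial_mul, smul_eq_mul, mul_one]
    have hsubeval : ∀ a : Fin n → F, a j ∈ S → MvPolynomial.eval a sub = 0 := by
      intro a ha
      rw [hsubg, map_mul]
      have : MvPolynomial.eval a (Polynomial.aeval (MvPolynomial.X j) p) = Polynomial.eval (a j) p := by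
        show MvPolynomial.eval a (Polynomial.eval₂ MvPolynomial.C (MvPolynomial.X j) p) = _
        rw [Polynomial.hom_eval₂]
        have hcomp : (MvPolynomial.eval a).comp (MvPolynomial.C (σ := Fin n)) = RingHom.id F := by
          ext r; simp
        rw [hcomp, MvPolynomial.eval_X]; rfl
      rw [this, hp, Polynomial.eval_prod]
      have : ∀ b ∈ S, Polynomial.eval (a j) (Polynomial.X - Polynomial.C b) = a j - b := by
        intro b _; simp
      rw [Finset.prod_congr rfl this, Finset.prod_eq_zero ha (sub_self _), mul_zero]
    have hcoeffe : MvPolynomial.coeff e sub = c := by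
      rw [hsubdef, MvPolynomial.coeff_sum]
      rw [Finset.sum_eq_single_of_mem s (Finset.self_mem_range_succ s)]
      · rw [he'e, MvPolynomial.coeff_monomial, if_pos rfl]
        have hps : p.coeff s = 1 := by rw [← hpdeg]; exact hmonic.coeff_natDegree
        rw [hps, mul_one]
      · intro k hk hks
        have hne2 : e' + Finsupp.single j k ≠ e := by
          intro hcontra
          apply hks
          have h1 := congrArg (fun u : Fin n →₀ ℕ => u j) hcontra
          have h2 := congrArg (fun u : Fin n →₀ ℕ => u j) he'e
          simp only [Finsupp.add_apply, Finsupp.single_eq_same] at h1 h2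
          omega
        rw [MvPolynomial.coeff_monomial, if_neg hne2]
    have hsupsub : ∀ f ∈ sub.support, ∃ k ≤ s, f = e' + Finsupp.single j k := by
      intro f hf
      rw [hsubdef] at hf
      have := MvPolynomial.support_sum hf
      rw [Finset.mem_biUnion] at this
      obtain ⟨k, hk, hfk⟩ := this
      have := MvPolynomial.support_monomial_subset hfk
      rw [Finset.mem_singleton] at this
      exact ⟨k, Nat.lt_succ_iff.mp (Finset.mem_range.mp hk), this⟩
    set Q1 := Q - sub with hQ1
    have hQ1supp : ∀ f ∈ Q1.support, theta f < theta e := by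
      intro f hf
      have hfe : f ≠ e := by
        intro h
        rw [h] at hf
        have : MvPolynomial.coeff e Q1 = 0 := by
          rw [hQ1, MvPolynomial.coeff_sub, hcoeffe, ← hc, sub_self]
        exact (MvPolynomial.mem_support_iff.mp hf) this
      have hcf : MvPolynomial.coeff f Q1 ≠ 0 := MvPolynomial.mem_support_iff.mp hf
      rw [hQ1, MvPolynomial.coeff_sub] at hcf
      by_cases hfQ : f ∈ Q.support
      · exact lt_of_le_of_ne (hmax f hfQ) (fun h => hfe (theta_inj h))
      · have : MvPolynomial.coeff f sub ≠ 0 := by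
          rw [MvPolynomial.notMem_support_iff.mp hfQ] at hcf
          intro h; rw [h] at hcf; simp at hcf
        obtain ⟨k, hks, hfk⟩ := hsupsub f (MvPolynomial.mem_support_iff.mpr this)
        have hklt : k < s := by
          rcases Nat.lt_or_ge k s with h | h
          · exact h
          · exfalso; apply hfe; rw [hfk, ← he'e]
            congr 1; congr 1; omega
        rw [← grlex_iff]
        left
        rw [hfk, ← he'e, sum_add_finsupp, sum_add_finsupp, sum_single_finsupp, sum_single_finsupp]
        omega
    obtain ⟨Q', hQ'good, hQ'eval⟩ := aux Q1 hQ1supp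
    refine ⟨Q', hQ'good, fun a ha hz => ?_⟩
    rw [hQ'eval a ha hz, hQ1, map_sub, hsubeval a (ha j), sub_zero]
  · by_cases hgood : ∀ i, ¬ m i ≤ e
    · -- e is a good monomial: peel it off
      set Q1 := Q - MvPolynomial.monomial e c with hQ1
      have hQ1supp : ∀ f ∈ Q1.support, theta f < theta e := by
        intro f hf
        have hcf : MvPolynomial.coeff f Q1 ≠ 0 := MvPolynomial.mem_support_iff.mp hf
        rw [hQ1, MvPolynomial.coeff_sub, MvPolynomial.coeff_monomial] at hcf
        have hfe : f ≠ e := by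
          intro h; rw [h] at hcf; simp [hc] at hcf
        have hfQ : f ∈ Q.support := by
          rw [if_neg (fun h => hfe h.symm), sub_zero] at hcf
          exact MvPolynomial.mem_support_iff.mpr hcf
        exact lt_of_le_of_ne (hmax f hfQ) (fun h => hfe (theta_inj h))
      obtain ⟨Q1', hQ1'good, hQ1'eval⟩ := aux Q1 hQ1supp
      refine ⟨Q1' + MvPolynomial.monomial e c, ?_, fun a ha hz => ?_⟩
      · intro u hu
        rcases Finset.mem_union.mp (MvPolynomial.support_add hu) with h | h
        · exact hQ1'good u h
        · have := MvPolynomial.support_monomial_subset h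
          rw [Finset.mem_singleton] at this
          subst this
          push_neg at hbox
          exact ⟨hbox, hgood⟩
      · rw [map_add, hQ1'eval a ha hz, hQ1, map_sub]
        ring
    · -- e is divisible by some leading monomial
      push_neg at hgood
      obtain ⟨i, hmi⟩ := hgood
      set lc := MvPolynomial.coeff (m i) (P i) with hlc
      have hlc0 : lc ≠ 0 := MvPolynomial.mem_support_iff.mp (hlm i).1
      set e'' := e - m i with he''
      have he''e : e'' + m i = e := tsub_add_cancel_of_le hmi
      set sub := MvPolynomial.monomial e'' (c / lc) * P i with hsubdef
      have hrepr : sub = ∑ f ∈ (P i).support,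
          MvPolynomial.monomial (e'' + f) ((c / lc) * MvPolynomial.coeff f (P i)) := by
        rw [hsubdef]
        conv_lhs => rw [← MvPolynomial.support_sum_monomial_coeff (P i)]
        rw [Finset.mul_sum]
        exact Finset.sum_congr rfl fun f _ => MvPolynomial.monomial_mul
      have hcoeffe : MvPolynomial.coeff e sub = c := by
        rw [hrepr, MvPolynomial.coeff_sum]
        rw [Finset.sum_eq_single_of_mem (m i) (hlm i).1]
        · rw [he''e, MvPolynomial.coeff_monomial, if_pos rfl, ← hlc, div_mul_cancel₀ c hlc0]
        · intro f hf hfm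
          have hne2 : e'' + f ≠ e := by
            intro hcontra
            rw [← he''e] at hcontra
            exact hfm (add_left_cancel hcontra)
          rw [MvPolynomial.coeff_monomial, if_neg hne2]
      have hsupsub : ∀ f ∈ sub.support, ∃ g ∈ (P i).support, f = e'' + g := by
        intro f hf
        rw [hrepr] at hf
        have := MvPolynomial.support_sum hf
        rw [Finset.mem_biUnion] at this
        obtain ⟨g, hg, hfg⟩ := this
        have := MvPolynomial.support_monomial_subset hfg
        rw [Finset.mem_singleton] at this
        exact ⟨g, hg, this⟩
      set Q1 := Q - sub with hQ1
      have hQ1supp : ∀ f ∈ Q1.support, theta f < theta e := by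
        intro f hf
        have hfe : f ≠ e := by
          intro h
          rw [h] at hf
          have : MvPolynomial.coeff e Q1 = 0 := by
            rw [hQ1, MvPolynomial.coeff_sub, hcoeffe, ← hc, sub_self]
          exact (MvPolynomial.mem_support_iff.mp hf) this
        have hcf : MvPolynomial.coeff f Q1 ≠ 0 := MvPolynomial.mem_support_iff.mp hf
        rw [hQ1, MvPolynomial.coeff_sub] at hcf
        by_cases hfQ : f ∈ Q.support
        · exact lt_of_le_of_ne (hmax f hfQ) (fun h => hfe (theta_inj h))
        · have : MvPolynomial.coeff f sub ≠ 0 := by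
            rw [MvPolynomial.notMem_support_iff.mp hfQ] at hcf
            intro h; rw [h] at hcf; simp at hcf
          obtain ⟨g, hg, hfg⟩ := hsupsub f (MvPolynomial.mem_support_iff.mpr this)
          have hgm : g ≠ m i := by
            intro h; apply hfe; rw [hfg, h, he''e]
          have := grlex_add e'' ((hlm i).2 g hg hgm)
          rw [he''e, ← hfg] at this
          exact (grlex_iff _ _).mp this
      obtain ⟨Q', hQ'good, hQ'eval⟩ := aux Q1 hQ1supp
      refine ⟨Q', hQ'good, fun a ha hz => ?_⟩
      rw [hQ'eval a ha hz, hQ1, map_sub, hsubdef, map_mul, hz i, mul_zero, sub_zero]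
theorem indep_card {n s : ℕ} (A B : Finset (Fin n)) (hAB : Disjoint A B)
    (X Y : (Fin n → Fin s) → Prop)
    (hX : ∀ v w, (∀ j ∈ A, v j = w j) → (X v → X w))
    (hY : ∀ v w, (∀ j ∈ B, v j = w j) → (Y v → Y w)) :
    Nat.card {v : Fin n → Fin s // X v ∧ Y v} * s ^ n =
      Nat.card {v : Fin n → Fin s // X v} * Nat.card {v : Fin n → Fin s // Y v} := by
  classical
  have key : Nat.card ({v : Fin n → Fin s // X v ∧ Y v} × (Fin n → Fin s)) =
      Nat.card ({v : Fin n → Fin s // X v} × {v : Fin n → Fin s // Y v}) := by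
    apply Nat.card_congr
    refine ⟨fun q => ⟨⟨fun j => if j ∈ A then q.1.1 j else q.2 j, ?_⟩,
        ⟨fun j => if j ∈ A then q.2 j else q.1.1 j, ?_⟩⟩,
      fun q => ⟨⟨fun j => if j ∈ A then q.1.1 j else q.2.1 j, ?_, ?_⟩,
        fun j => if j ∈ A then q.2.1 j else q.1.1 j⟩, ?_, ?_⟩
    · exact hX q.1.1 _ (fun j hj => by simp [hj]) q.1.2.1
    · exact hY q.1.1 _ (fun j hj => by simp [Finset.disjoint_right.mp hAB hj]) q.1.2.2
    · exact hX q.1.1 _ (fun j hj => by simp [hj]) q.1.2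
    · exact hY q.2.1 _ (fun j hj => by simp [Finset.disjoint_right.mp hAB hj]) q.2.2
    · intro q
      ext j <;> by_cases hj : j ∈ A <;> simp [hj]
    · intro q
      ext j <;> by_cases hj : j ∈ A <;> simp [hj]
  rw [Nat.card_prod, Nat.card_prod, Nat.card_fun, Nat.card_eq_fintype_card (α := Fin s),
    Nat.card_eq_fintype_card (α := Fin n)] at key
  simpa using key

theorem indep_prod {n s t : ℕ} (A : Fin t → Finset (Fin n))
    (hdisj : ∀ i j, i ≠ j → Disjoint (A i) (A j))
    (p : Fin t → (Fin n → Fin s) → Prop)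
    (hdep : ∀ i v w, (∀ j ∈ A i, v j = w j) → (p i v → p i w)) :
    ∀ T : Finset (Fin t),
      Nat.card {v : Fin n → Fin s // ∀ i ∈ T, p i v} * (s ^ n) ^ T.card =
        (∏ i ∈ T, Nat.card {v : Fin n → Fin s // p i v}) * s ^ n := by
  classical
  intro T
  induction T using Finset.induction with
  | empty =>
    have : Nat.card {v : Fin n → Fin s // ∀ i ∈ (∅ : Finset (Fin t)), p i v} =
        Nat.card (Fin n → Fin s) := Nat.card_congr (Equiv.subtypeUnivEquiv (by simp))
    rw [this, Nat.card_fun]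
    simp
  | @insert a T ha IH =>
    have hcongr : Nat.card {v : Fin n → Fin s // ∀ i ∈ insert a T, p i v} =
        Nat.card {v : Fin n → Fin s // p a v ∧ ∀ i ∈ T, p i v} :=
      Nat.card_congr (Equiv.subtypeEquivRight (fun v => Finset.forall_mem_insert a T _))
    have hkey := indep_card (A a) (T.biUnion A)
      ((Finset.disjoint_biUnion_right _ _ _).mpr
        (fun i hi => hdisj a i (fun h => ha (h ▸ hi))))
      (p a) (fun v => ∀ i ∈ T, p i v)
      (hdep a)
      (fun v w hvw hv i hi => hdep i v w
        (fun j hj => hvw j (Finset.mem_biUnion.mpr ⟨i, hi, hj⟩)) (hv i hi))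
    rw [hcongr, Finset.card_insert_of_notMem ha, Finset.prod_insert ha, pow_succ]
    calc Nat.card {v : Fin n → Fin s // p a v ∧ ∀ i ∈ T, p i v} * ((s ^ n) ^ T.card * s ^ n)
        = (Nat.card {v : Fin n → Fin s // p a v ∧ ∀ i ∈ T, p i v} * s ^ n) * (s ^ n) ^ T.card := by
          ring
      _ = (Nat.card {v : Fin n → Fin s // p a v} * Nat.card {v : Fin n → Fin s // ∀ i ∈ T, p i v}) * (s ^ n) ^ T.card := by
          rw [hkey]
      _ = Nat.card {v : Fin n → Fin s // p a v} * (Nat.card {v : Fin n → Fin s // ∀ i ∈ T, p i v} * (s ^ n) ^ T.card) := by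
          ring
      _ = Nat.card {v : Fin n → Fin s // p a v} * ((∏ i ∈ T, Nat.card {v : Fin n → Fin s // p i v}) * s ^ n) := by
          rw [IH]
      _ = (Nat.card {v : Fin n → Fin s // p a v} * ∏ i ∈ T, Nat.card {v : Fin n → Fin s // p i v}) * s ^ n := by
          ring
noncomputable def vF {n s : ℕ} (v : Fin n → Fin s) : Fin n →₀ ℕ :=
  Finsupp.equivFunOnFinite.symm (fun j => (v j : ℕ))

theorem vF_apply {n s : ℕ} (v : Fin n → Fin s) (j : Fin n) : vF v j = (v j : ℕ) :=
  rfl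

theorem single_count_bound {n s : ℕ} (hs : 0 < s) (μ : Fin n →₀ ℕ)
    (hμ : ∀ j, μ j ≤ s - 1) :
    Nat.card {v : Fin n → Fin s // ¬ μ ≤ vF v} ≤ s ^ n - s ^ (n - μ.support.card) := by
  classical
  have hcompl : Nat.card {v : Fin n → Fin s // ¬ μ ≤ vF v} =
      s ^ n - Nat.card {v : Fin n → Fin s // μ ≤ vF v} := by
    rw [Nat.card_eq_fintype_card, Nat.card_eq_fintype_card,
      Fintype.card_subtype_compl, Fintype.card_fun, Fintype.card_fin, Fintype.card_fin]
  rw [hcompl]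
  have hlow : s ^ (n - μ.support.card) ≤ Nat.card {v : Fin n → Fin s // μ ≤ vF v} := by
    have hinj : Function.Injective
        (fun (w : {j : Fin n // j ∉ μ.support} → Fin s) =>
          (⟨fun j => if h : j ∈ μ.support then ⟨s - 1, by omega⟩ else w ⟨j, h⟩, by
            rw [Finsupp.le_iff]
            intro j hj
            rw [vF_apply]
            simp only [hj, dif_pos]
            exact le_trans (hμ j) (le_refl _)⟩ :
            {v : Fin n → Fin s // μ ≤ vF v})) := by
      intro w1 w2 h
      funext j
      have := congrArg (fun q : {v : Fin n → Fin s // μ ≤ vF v} => q.1 j.1) h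
      simpa [j.2] using this
    have := Nat.card_le_card_of_injective _ hinj
    calc s ^ (n - μ.support.card)
        = Nat.card ({j : Fin n // j ∉ μ.support} → Fin s) := by
          rw [Nat.card_fun, Nat.card_eq_fintype_card, Nat.card_eq_fintype_card,
            Fintype.card_fin, Fintype.card_subtype_compl, Fintype.card_fin, Fintype.card_coe]
      _ ≤ _ := this
  omega

/-- Footprint bound: if `P₁, …, P_t` are nonzero polynomials over `𝔽_q`, of
individual degree at most `s-1` in each variable, whose graded-lex leading
monomials `m i` involve at most `d` variables each and are supported on
pairwise disjoint sets of variables, then the set of common zeros inside `S^n`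
(where `S ⊆ 𝔽_q`, `|S| = s ≥ 2`) has size at most `(1 - 1/s^d)^t · s^n`. -/
theorem stmt9 {F : Type*} [Field F] [Fintype F] [DecidableEq F]
    {n s d t : ℕ} (hs : 2 ≤ s) (S : Finset F) (hS : S.card = s)
    (P : Fin t → MvPolynomial (Fin n) F) (hP0 : ∀ i, P i ≠ 0)
    (hdeg : ∀ i, ∀ e ∈ (P i).support, ∀ j : Fin n, e j ≤ s - 1)
    (m : Fin t → (Fin n →₀ ℕ))
    (hlm : ∀ i, m i ∈ (P i).support ∧
      ∀ e ∈ (P i).support, e ≠ m i → GrlexLT e (m i))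
    (hdisj : ∀ i j, i ≠ j → Disjoint (m i).support (m j).support)
    (hvars : ∀ i, (m i).support.card ≤ d) :
    ({a : Fin n → F | (∀ j, a j ∈ S) ∧ ∀ i, MvPolynomial.eval a (P i) = 0}.ncard : ℝ)
      ≤ (1 - 1 / (s : ℝ) ^ d) ^ t * (s : ℝ) ^ n := by
  classical
  set Z : Set (Fin n → F) :=
    {a : Fin n → F | (∀ j, a j ∈ S) ∧ ∀ i, MvPolynomial.eval a (P i) = 0} with hZdef
  -- the "good" exponent vectors as tuples
  set D := {v : Fin n → Fin s // ∀ i, ¬ m i ≤ vF v} with hDdef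
  -- Step 1: surjection from (D → F) onto (Z → F)
  have hLsurj : ∃ L : (D → F) → (↥Z → F), Function.Surjective L := by
    refine ⟨fun c z => MvPolynomial.eval z.1
      (∑ v : D, MvPolynomial.monomial (vF v.1) (c v)), fun φ => ?_⟩
    set ψ : (Fin n → F) → F := fun a => if h : a ∈ Z then φ ⟨a, h⟩ else 0 with hψ
    obtain ⟨Q0, hQ0⟩ := interp S ψ
    obtain ⟨Q', hgood, heval⟩ := reduction S hS P m hlm Q0
    refine ⟨fun v => MvPolynomial.coeff (vF v.1) Q', ?_⟩
    have hpoly : (∑ v : D, MvPolynomial.monomial (vF v.1)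
        (MvPolynomial.coeff (vF v.1) Q')) = Q' := by
      apply MvPolynomial.ext
      intro u
      rw [MvPolynomial.coeff_sum]
      simp only [MvPolynomial.coeff_monomial]
      by_cases hu : u ∈ Q'.support
      · obtain ⟨h1, h2⟩ := hgood u hu
        have hv0F : vF (fun j => (⟨u j, h1 j⟩ : Fin s)) = u :=
          Finsupp.ext fun j => vF_apply _ j
        have hv0P : ∀ i, ¬ m i ≤ vF (fun j => (⟨u j, h1 j⟩ : Fin s)) := by
          intro i; rw [hv0F]; exact h2 i
        set v0 : D := ⟨fun j => (⟨u j, h1 j⟩ : Fin s), hv0P⟩ with hv0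
        rw [Finset.sum_eq_single_of_mem v0 (Finset.mem_univ v0)]
        · rw [if_pos hv0F]
          exact congrArg (fun w => MvPolynomial.coeff w Q') hv0F
        · intro v _ hv
          rw [if_neg]
          intro hvu
          apply hv
          apply Subtype.ext
          funext j
          apply Fin.val_injective
          have := congrArg (fun w : Fin n →₀ ℕ => w j) (hvu.trans hv0F.symm)
          simpa [vF_apply] using this
      · rw [MvPolynomial.notMem_support_iff.mp hu]
        apply Finset.sum_eq_zero
        intro v _
        split_ifs with h
        · rw [h, MvPolynomial.notMem_support_iff.mp hu]
        · rfl
    funext z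
    simp only
    rw [hpoly, heval z.1 z.2.1 z.2.2, hQ0 z.1 z.2.1, hψ]
    simp only [z.2, dif_pos]
  obtain ⟨L, hL⟩ := hLsurj
  have hq : 1 < Nat.card F := by
    rw [Nat.card_eq_fintype_card]; exact Fintype.one_lt_card
  have hcard1 : Nat.card ↥Z ≤ Nat.card D := by
    have h1 := Nat.card_le_card_of_surjective L hL
    rw [Nat.card_fun, Nat.card_fun] at h1
    exact (Nat.pow_le_pow_iff_right hq).mp h1
  -- Step 2: product formula for the cardinality of D
  have hdep : ∀ i (v w : Fin n → Fin s), (∀ j ∈ (m i).support, v j = w j) →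
      (¬ m i ≤ vF v → ¬ m i ≤ vF w) := by
    intro i v w hvw hv hw
    apply hv
    rw [Finsupp.le_iff] at hw ⊢
    intro j hj
    have := hw j hj
    rw [vF_apply] at this ⊢
    rw [hvw j hj]
    exact this
  have hD : Nat.card D =
      Nat.card {v : Fin n → Fin s // ∀ i ∈ (univ : Finset (Fin t)), ¬ m i ≤ vF v} :=
    Nat.card_congr (Equiv.subtypeEquivRight (by simp))
  have hprod := indep_prod (fun i => (m i).support) hdisj
    (fun i v => ¬ m i ≤ vF v) hdep univ
  rw [Finset.card_univ, Fintype.card_fin] at hprod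
  rw [← hD] at hprod
  -- Step 3: bound each factor
  have hs0 : (0:ℝ) < (s:ℝ) := by
    have : (0:ℕ) < s := by omega
    exact_mod_cast this
  have hs1 : (1:ℝ) ≤ (s:ℝ) := by
    have : (1:ℕ) ≤ s := by omega
    exact_mod_cast this
  have hsn : (0:ℝ) < (s:ℝ) ^ n := pow_pos hs0 n
  have hfacnn : (0:ℝ) ≤ 1 - 1 / (s:ℝ)^d := by
    have h1 : (1:ℝ) ≤ (s:ℝ)^d := by
      calc (1:ℝ) = 1^d := (one_pow d).symm
        _ ≤ (s:ℝ)^d := pow_le_pow_left₀ zero_le_one hs1 d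
    have h2 : 1 / (s:ℝ)^d ≤ 1 := by
      rw [div_le_one (by positivity)]
      exact h1
    linarith
  have hfac : ∀ i : Fin t,
      (Nat.card {v : Fin n → Fin s // ¬ m i ≤ vF v} : ℝ) ≤ (1 - 1 / (s:ℝ) ^ d) * (s:ℝ) ^ n := by
    intro i
    have hk_d : (m i).support.card ≤ d := hvars i
    have hk_n : (m i).support.card ≤ n := le_trans (Finset.card_le_univ _) (by simp)
    have hμ : ∀ j, m i j ≤ s - 1 := hdeg i (m i) (hlm i).1
    have hb := single_count_bound (show 0 < s by omega) (m i) hμ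
    set k := (m i).support.card with hk
    have hle : s ^ (n - k) ≤ s ^ n := Nat.pow_le_pow_right (by omega) (by omega)
    have hcast : ((s ^ n - s ^ (n - k) : ℕ) : ℝ) = (s:ℝ)^n - (s:ℝ)^(n-k) := by
      push_cast [Nat.cast_sub hle]
      ring
    have h1 : (Nat.card {v : Fin n → Fin s // ¬ m i ≤ vF v} : ℝ)
        ≤ (s:ℝ)^n - (s:ℝ)^(n-k) := by
      rw [← hcast]
      exact_mod_cast hb
    refine le_trans h1 ?_
    have h2 : (s:ℝ)^n / (s:ℝ)^d ≤ (s:ℝ)^(n-k) := by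
      have hkd : (s:ℝ)^k ≤ (s:ℝ)^d := pow_le_pow_right₀ hs1 hk_d
      have h3 : (s:ℝ)^(n-k) = (s:ℝ)^n / (s:ℝ)^k := by
        rw [eq_div_iff (by positivity), ← pow_add]
        congr 1
        omega
      rw [h3]
      exact div_le_div_of_nonneg_left (by positivity) (by positivity) hkd
    have h4 : (1 - 1 / (s:ℝ)^d) * (s:ℝ)^n = (s:ℝ)^n - (s:ℝ)^n / (s:ℝ)^d := by ring
    rw [h4]
    linarith
  -- Step 4: combine everything
  have hkey := congrArg (fun x : ℕ => (x:ℝ)) hprod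
  push_cast at hkey
  have hprodle : (∏ i : Fin t, (Nat.card {v : Fin n → Fin s // ¬ m i ≤ vF v} : ℝ))
      ≤ ((1 - 1 / (s:ℝ)^d) * (s:ℝ)^n) ^ t := by
    calc (∏ i : Fin t, (Nat.card {v : Fin n → Fin s // ¬ m i ≤ vF v} : ℝ))
        ≤ ∏ _i : Fin t, ((1 - 1 / (s:ℝ)^d) * (s:ℝ)^n) :=
          Finset.prod_le_prod (fun i _ => by positivity) (fun i _ => hfac i)
      _ = ((1 - 1 / (s:ℝ)^d) * (s:ℝ)^n) ^ t := by
          rw [Finset.prod_const, Finset.card_univ, Fintype.card_fin]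
  have hDle : (Nat.card D : ℝ) * ((s:ℝ)^n)^t
      ≤ ((1 - 1/(s:ℝ)^d)^t * (s:ℝ)^n) * ((s:ℝ)^n)^t := by
    rw [hkey]
    calc (∏ i : Fin t, (Nat.card {v : Fin n → Fin s // ¬ m i ≤ vF v} : ℝ)) * (s:ℝ)^n
        ≤ ((1 - 1/(s:ℝ)^d) * (s:ℝ)^n)^t * (s:ℝ)^n :=
          mul_le_mul_of_nonneg_right hprodle hsn.le
      _ = ((1 - 1/(s:ℝ)^d)^t * (s:ℝ)^n) * ((s:ℝ)^n)^t := by rw [mul_pow]; ring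
  have hD2 : (Nat.card D : ℝ) ≤ (1 - 1/(s:ℝ)^d)^t * (s:ℝ)^n :=
    le_of_mul_le_mul_right hDle (pow_pos hsn t)
  have hZle : (Z.ncard : ℝ) ≤ (Nat.card D : ℝ) := by
    rw [← Nat.card_coe_set_eq]
    exact_mod_cast hcard1
  exact le_trans hZle hD2
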